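/- arXiv:1110.4912 — 3 statements merged into one kernel-verified Lean document; each statement's English description precedes it below -/
import Mathlib

section
/- Let 0 < α < π/4, let s : ℝ → ℝ be a scaling function, let r > 0 and let λ ∈ ℂ with |λ| < sin α. Then for every x > 0 the point z = x + λ·s(x−r) satisfies z ≠ 0 and |arg z| < α (so z ∈ 𝕊_α ∪ (0,∞) ⊆ 𝕊_α); moreover for every x ≥ r one has |x + λ·s(x−r)| ≥ r. (The complex-scaled curve 𝔏_{λ,r} = {x + λ·s(x−r) : x > 0} lies in the sector 𝕊_α and stays at distance at least r from the origin beyond x = r.) -/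
open Complex Set

noncomputable section

set_option maxHeartbeats 800000 in
/-- The complex-scaled curve `𝔏_{λ,r} = {x + λ·s(x−r) : x > 0}` lies in the sector `𝕊_α`
and stays at distance at least `r` from the origin beyond `x = r`. -/
theorem stmt_6 (α : ℝ) (hα : 0 < α) (hα' : α < Real.pi / 4)
    (s : ℝ → ℝ) (hs : ContDiff ℝ 1 s) (hs0 : ∀ x ≤ 0, s x = 0)
    (hs1 : ∀ x, 0 ≤ deriv s x) (hs2 : ∀ x, deriv s x ≤ 1)
    (r : ℝ) (hr : 0 < r) (l : ℂ) (hl : ‖l‖ < Real.sin α) :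
    (∀ x : ℝ, 0 < x →
      ((x : ℂ) + l * (s (x - r) : ℝ)) ≠ 0 ∧
      |((x : ℂ) + l * (s (x - r) : ℝ)).arg| < α) ∧
    (∀ x : ℝ, r ≤ x → r ≤ ‖(x : ℂ) + l * (s (x - r) : ℝ)‖) := by
  have hπ := Real.pi_pos
  have hα2 : α < Real.pi / 2 := by linarith
  have hsα : 0 < Real.sin α := Real.sin_pos_of_pos_of_lt_pi hα (by linarith)
  have hcα : 0 < Real.cos α := Real.cos_pos_of_mem_Ioo ⟨by linarith, hα2⟩
  have hpy : Real.sin α ^ 2 + Real.cos α ^ 2 = 1 := Real.sin_sq_add_cos_sq α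
  have hsα1 : Real.sin α ≤ 1 := Real.sin_le_one α
  have hsdiff : Differentiable ℝ s := hs.differentiable one_ne_zero
  have hmono : Monotone s := monotone_of_deriv_nonneg hsdiff hs1
  have hge : ∀ t : ℝ, 0 ≤ s t := by
    intro t
    rcases le_or_gt t 0 with h | h
    · rw [hs0 t h]
    · rw [← hs0 0 le_rfl]; exact hmono h.le
  have hle : ∀ t : ℝ, 0 ≤ t → s t ≤ t := by
    intro t ht
    have hg : Monotone (fun x => x - s x) := by
      apply monotone_of_deriv_nonneg (differentiable_id.sub hsdiff)
      intro x
      rw [deriv_sub differentiableAt_id (hsdiff x)]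
      have : deriv id x = 1 := deriv_id x
      change deriv id x = 1 at this
      rw [this]
      linarith [hs2 x]
    have := hg ht
    simp only [hs0 0 le_rfl, sub_zero] at this
    linarith
  have key : ∀ x : ℝ, 0 < x → ‖l‖ * s (x - r) < Real.sin α * x := by
    intro x hx
    rcases eq_or_lt_of_le (hge (x - r)) with h | h
    · rw [← h]; simpa using mul_pos hsα hx
    · have h1 : s (x - r) ≤ x := by
        rcases le_or_gt (x - r) 0 with h' | h'
        · rw [hs0 _ h']; exact hx.le
        · linarith [hle (x - r) h'.le]
      calc ‖l‖ * s (x - r) < Real.sin α * s (x - r) :=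
            mul_lt_mul_of_pos_right hl h
        _ ≤ Real.sin α * x := mul_le_mul_of_nonneg_left h1 hsα.le
  constructor
  · intro x hx
    obtain ⟨t, htdef⟩ : ∃ t, s (x - r) = t := ⟨_, rfl⟩
    rw [htdef]
    obtain ⟨z, hz⟩ : ∃ z : ℂ, (x : ℂ) + l * (t : ℝ) = z := ⟨_, rfl⟩
    rw [hz]
    obtain ⟨a, hadef⟩ : ∃ a : ℝ, x + l.re * t = a := ⟨_, rfl⟩
    obtain ⟨b, hbdef⟩ : ∃ b : ℝ, l.im * t = b := ⟨_, rfl⟩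
    have hre : z.re = a := by rw [← hz, ← hadef]; simp
    have him : z.im = b := by rw [← hz, ← hbdef]; simp
    have habs2 : (l.re * t) ^ 2 + (l.im * t) ^ 2 < (Real.sin α * x) ^ 2 := by
      have h1 : (l.re * t) ^ 2 + (l.im * t) ^ 2 = (‖l‖ * t) ^ 2 := by
        rw [mul_pow, mul_pow, mul_pow, Complex.sq_norm, Complex.normSq_apply]; ring
      rw [h1]
      have h2 : 0 ≤ ‖l‖ * t := mul_nonneg (norm_nonneg l) (htdef ▸ hge _)
      exact pow_lt_pow_left₀ (htdef ▸ key x hx) h2 two_ne_zero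
    have hab : (a - x) ^ 2 + b ^ 2 < (Real.sin α * x) ^ 2 := by
      have h3 : a - x = l.re * t := by rw [← hadef]; ring
      rw [h3, ← hbdef]; exact habs2
    have ha : 0 < a := by
      nlinarith [sq_nonneg b, mul_pos hx hx, sq_nonneg x,
        mul_nonneg (mul_nonneg (sub_nonneg.2 hsα1) (by linarith : (0:ℝ) ≤ 1 + Real.sin α)) (sq_nonneg x)]
    have hb1 : b * Real.cos α < a * Real.sin α := by
      nlinarith [sq_nonneg ((a - x) * Real.cos α + b * Real.sin α), mul_pos hx hsα]
    have hb2 : -(b * Real.cos α) < a * Real.sin α := by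
      nlinarith [sq_nonneg ((a - x) * Real.cos α - b * Real.sin α), mul_pos hx hsα]
    have hzne : z ≠ 0 := by
      intro h
      rw [h] at hre
      simp at hre
      linarith
    refine ⟨hzne, ?_⟩
    have habz : 0 < ‖z‖ := norm_pos_iff.2 hzne
    have hzz : ‖z‖ ^ 2 = a ^ 2 + b ^ 2 := by
      rw [Complex.sq_norm, Complex.normSq_apply, hre, him]; ring
    have hbc : |b| * Real.cos α < a * Real.sin α := by
      rcases _root_.abs_cases b with ⟨h, _⟩ | ⟨h, _⟩
      · rw [h]; exact hb1
      · rw [h]; linarith [hb2]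
    have hbz : |b| < Real.sin α * ‖z‖ := by
      have h2 : |b| ^ 2 < (Real.sin α * ‖z‖) ^ 2 := by
        have hq : (|b| * Real.cos α) ^ 2 < (a * Real.sin α) ^ 2 :=
          pow_lt_pow_left₀ hbc (mul_nonneg (abs_nonneg b) hcα.le) two_ne_zero
        rw [mul_pow, _root_.sq_abs] at hq
        rw [_root_.sq_abs]
        have e0 : b ^ 2 = b ^ 2 * Real.sin α ^ 2 + b ^ 2 * Real.cos α ^ 2 := by
          linear_combination (-b ^ 2) * hpy
        have e1 : (a * Real.sin α) ^ 2 = a ^ 2 * Real.sin α ^ 2 := by ring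
        have e2 : (Real.sin α * ‖z‖) ^ 2
            = Real.sin α ^ 2 * a ^ 2 + Real.sin α ^ 2 * b ^ 2 := by
          rw [mul_pow, hzz]; ring
        rw [e1] at hq
        rw [e2]
        linarith
      exact lt_of_pow_lt_pow_left₀ 2 (mul_nonneg hsα.le habz.le) h2
    have hsin : Real.sin |z.arg| < Real.sin α := by
      have h1 : Real.sin z.arg = b / ‖z‖ := by rw [Complex.sin_arg, him]
      rcases _root_.abs_cases z.arg with ⟨h, _⟩ | ⟨h, _⟩
      · rw [h, h1, div_lt_iff₀ habz]
        calc b ≤ |b| := le_abs_self b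
          _ < Real.sin α * ‖z‖ := hbz
      · rw [h, Real.sin_neg, h1, ← neg_div, div_lt_iff₀ habz]
        calc -b ≤ |b| := neg_le_abs b
          _ < Real.sin α * ‖z‖ := hbz
    by_contra hcon
    push_neg at hcon
    have harg2 : |z.arg| ≤ Real.pi / 2 := Complex.abs_arg_le_pi_div_two_iff.2 (by rw [hre]; exact ha.le)
    have := Real.strictMonoOn_sin.monotoneOn ⟨by linarith, by linarith⟩
      ⟨by linarith [abs_nonneg z.arg], harg2⟩ hcon
    linarith
  · intro x hx
    have ht1 : s (x - r) ≤ x - r := hle (x - r) (by linarith)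
    have ht0 := hge (x - r)
    set t := s (x - r)
    have h1 : ((x : ℂ) + l * (t : ℝ)).re = x + l.re * t := by simp
    have h2 : r ≤ ((x : ℂ) + l * (t : ℝ)).re := by
      rw [h1]
      have hre : -‖l‖ ≤ l.re :=
        (neg_le_neg (Complex.abs_re_le_norm l)).trans (neg_abs_le l.re)
      have h3 : -‖l‖ * t ≤ l.re * t := mul_le_mul_of_nonneg_right hre ht0
      have h4 : ‖l‖ ≤ 1 := hl.le.trans hsα1
      nlinarith
    exact h2.trans (Complex.re_le_norm _)
end
end

section
/- Let θ ∈ [0, π/2), σ ∈ (0, π/2), and let z₀, e ∈ ℂ with z₀ ≠ 0, |arg z₀| ≤ θ and |e| ≤ sin(σ)·|z₀|. Then z₀ + e ≠ 0, |arg(z₀ + e)| ≤ θ + σ, and (1 − sin σ)·|z₀| ≤ |z₀ + e| ≤ (1 + sin σ)·|z₀|. (Stability of a sector condition under a relatively small perturbation; the perturbation step in the proof of Lemma 4.1.) -/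
open Complex

/-- Stability of a sector condition under a relatively small perturbation
(the perturbation step in the proof of Lemma 4.1). -/
theorem stmt_10 (θ σ : ℝ) (hθ : θ ∈ Set.Ico (0:ℝ) (Real.pi / 2))
    (hσ : σ ∈ Set.Ioo (0:ℝ) (Real.pi / 2))
    (z₀ e : ℂ) (hz₀ : z₀ ≠ 0) (harg : |z₀.arg| ≤ θ)
    (he : ‖e‖ ≤ Real.sin σ * ‖z₀‖) :
    z₀ + e ≠ 0 ∧
    |(z₀ + e).arg| ≤ θ + σ ∧
    (1 - Real.sin σ) * ‖z₀‖ ≤ ‖z₀ + e‖ ∧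
    ‖z₀ + e‖ ≤ (1 + Real.sin σ) * ‖z₀‖ := by
  obtain ⟨hσ0, hσ2⟩ := hσ
  obtain ⟨hθ0, hθ2⟩ := hθ
  have hr1 : Real.sin σ < 1 := by
    have h := Real.sin_lt_sin_of_lt_of_le_pi_div_two (x := σ) (y := Real.pi / 2)
      (by linarith) le_rfl hσ2
    rwa [Real.sin_pi_div_two] at h
  have hr0 : 0 < Real.sin σ := Real.sin_pos_of_pos_of_lt_pi hσ0 (by linarith [Real.pi_pos])
  have habsz : 0 < ‖z₀‖ := norm_pos_iff.mpr hz₀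
  have hlow : (1 - Real.sin σ) * ‖z₀‖ ≤ ‖z₀ + e‖ := by
    have h := norm_add_le (z₀ + e) (-e)
    simp only [add_neg_cancel_right, norm_neg] at h
    nlinarith
  have hup : ‖z₀ + e‖ ≤ (1 + Real.sin σ) * ‖z₀‖ := by
    have := norm_add_le z₀ e
    nlinarith
  have hne : z₀ + e ≠ 0 := by
    intro h
    rw [h] at hlow
    simp only [norm_zero] at hlow
    nlinarith
  refine ⟨hne, ?_, hlow, hup⟩
  -- arg bound
  set w : ℂ := e / z₀ with hw
  have hwabs : ‖w‖ ≤ Real.sin σ := by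
    rw [hw, norm_div, div_le_iff₀ habsz]
    exact he
  have hmul : z₀ + e = z₀ * (1 + w) := by
    rw [hw]
    field_simp
  have hrew : |w.re| ≤ Real.sin σ := le_trans (Complex.abs_re_le_norm w) hwabs
  have hre1w : 0 < (1 + w).re := by
    simp only [Complex.add_re, Complex.one_re]
    cases abs_le.mp hrew with
    | intro h1 h2 => linarith
  have h1wne : (1 + w) ≠ 0 := by
    intro h
    rw [h] at hre1w; simp at hre1w
  -- |Im(1+w)| ≤ sin σ * |1+w|
  have hkey : |(1 + w).im| ≤ Real.sin σ * ‖1 + w‖ := by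
    have habs2 : w.re ^ 2 + w.im ^ 2 ≤ Real.sin σ ^ 2 := by
      have h1 : w.re ^ 2 + w.im ^ 2 = ‖w‖ ^ 2 := by
        rw [Complex.sq_norm, Complex.normSq_apply]; ring
      nlinarith [norm_nonneg w]
    have hsq : (1 + w).im ^ 2 ≤ Real.sin σ ^ 2 * ‖1 + w‖ ^ 2 := by
      rw [Complex.sq_norm, Complex.normSq_apply]
      simp only [Complex.add_re, Complex.add_im, Complex.one_re, Complex.one_im, zero_add]
      have hA : 0 ≤ (Real.sin σ ^ 2 - w.re ^ 2 - w.im ^ 2) * (1 - Real.sin σ ^ 2) := by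
        apply mul_nonneg <;> nlinarith
      nlinarith [sq_nonneg (w.re + Real.sin σ ^ 2)]
    have hs : 0 ≤ Real.sin σ * ‖1 + w‖ :=
      mul_nonneg (le_of_lt hr0) (norm_nonneg _)
    nlinarith [_root_.sq_abs ((1 + w).im), abs_nonneg ((1 + w).im)]
  have harg1w : |(1 + w).arg| ≤ σ := by
    by_contra hcon
    push_neg at hcon
    have hlt2 : |(1 + w).arg| < Real.pi / 2 :=
      Complex.abs_arg_lt_pi_div_two_iff.mpr (Or.inl hre1w)
    have hsinlt : Real.sin σ < Real.sin |(1 + w).arg| :=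
      Real.sin_lt_sin_of_lt_of_le_pi_div_two (by linarith) (le_of_lt hlt2) hcon
    have hsineq : Real.sin |(1 + w).arg| = |Real.sin ((1 + w).arg)| := by
      rcases le_or_gt 0 ((1 + w).arg) with h | h
      · rw [_root_.abs_of_nonneg h,
          _root_.abs_of_nonneg (Real.sin_nonneg_of_nonneg_of_le_pi h (Complex.arg_le_pi _))]
      · rw [_root_.abs_of_neg h, Real.sin_neg, _root_.abs_of_nonpos
          (Real.sin_nonpos_of_nonpos_of_neg_pi_le (le_of_lt h)
            (le_of_lt (Complex.neg_pi_lt_arg _)))]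
    have hsinle : |Real.sin ((1 + w).arg)| ≤ Real.sin σ := by
      rw [Complex.sin_arg, abs_div, _root_.abs_of_nonneg (norm_nonneg _),
        div_le_iff₀ (norm_pos_iff.mpr h1wne)]
      exact hkey
    rw [hsineq] at hsinlt
    linarith
  have hargeq : (z₀ + e).arg = z₀.arg + (1 + w).arg := by
    rw [hmul]
    refine Complex.arg_mul hz₀ h1wne ?_
    constructor
    · nlinarith [neg_abs_le z₀.arg, neg_abs_le ((1+w).arg), Real.pi_pos]
    · nlinarith [le_abs_self z₀.arg, le_abs_self ((1+w).arg)]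
  rw [hargeq]
  calc |z₀.arg + (1 + w).arg| ≤ |z₀.arg| + |(1 + w).arg| := abs_add_le _ _
    _ ≤ θ + σ := add_le_add harg harg1w
end

section
/- Let (X, μ) be a measure space, m ≥ 1, φ ∈ [0, π/2), δ ∈ (0,1], ρ₀ ≥ 0 and c₀ ≥ 0. Let M : X → ℂ^{m×m} be such that for μ-a.e. x and all ξ ∈ ℂ^m: Re⟨M(x)ξ, ξ⟩ ≥ 0, |Im⟨M(x)ξ, ξ⟩| ≤ tan(φ)·Re⟨M(x)ξ, ξ⟩, and |⟨M(x)ξ, ξ⟩| ≤ δ^{−1}|ξ|². Let ρ : X → ℂ with |ρ(x)| ≤ ρ₀ a.e., let b : X → ℂ^m with |b(x)|² ≤ c₀ a.e., let u : X → ℂ with ∫|u|² dμ < ∞, and let F : X → ℂ^m be measurable with ∫ Re⟨M(x)F(x), F(x)⟩ dμ < ∞ and with x ↦ ρ(x)·⟨M(x)F(x), u(x)·b(x)⟩ integrable. Then for every ε > 0: |∫ ρ(x)·⟨M(x)F(x), u(x)·b(x)⟩ dμ(x)| ≤ ε·∫ Re⟨M F, F⟩ dμ + (ρ₀²·c₀·δ^{−1}·(1+tan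 φ)² / (4ε))·∫ |u|² dμ. (Relative bound of the first-order cross term against the principal sectorial form; the abstracted content of Lemma 4.2.) -/
open Complex Finset MeasureTheory

noncomputable section


def Bf {m : ℕ} (A : Matrix (Fin m) (Fin m) ℂ) (ξ τ : Fin m → ℂ) : ℂ :=
  ∑ j, ∑ k, (starRingEnd ℂ) (τ j) * A j k * ξ k

variable {m : ℕ} {A : Matrix (Fin m) (Fin m) ℂ} {ξ τ σ : Fin m → ℂ} {c : ℂ}

lemma Bf_smul_left : Bf A (c • ξ) τ = c * Bf A ξ τ := by
  simp only [Bf, Pi.smul_apply, smul_eq_mul, Finset.mul_sum]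
  exact Finset.sum_congr rfl fun j _ => Finset.sum_congr rfl fun k _ => by ring

lemma Bf_smul_right : Bf A ξ (c • τ) = (starRingEnd ℂ) c * Bf A ξ τ := by
  simp only [Bf, Pi.smul_apply, smul_eq_mul, map_mul, Finset.mul_sum]
  exact Finset.sum_congr rfl fun j _ => Finset.sum_congr rfl fun k _ => by ring

lemma Bf_add_left : Bf A (ξ + τ) σ = Bf A ξ σ + Bf A τ σ := by
  simp [Bf, mul_add, Finset.sum_add_distrib]

lemma Bf_add_right : Bf A ξ (τ + σ) = Bf A ξ τ + Bf A ξ σ := by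
  simp [Bf, add_mul, Finset.sum_add_distrib]

lemma Bf_expand : Bf A (ξ + τ) (ξ + τ) = Bf A ξ ξ + Bf A ξ τ + Bf A τ ξ + Bf A τ τ := by
  rw [Bf_add_left, Bf_add_right, Bf_add_right]; ring

lemma Bf_sub : Bf A (ξ - τ) (ξ - τ) = Bf A ξ ξ - Bf A ξ τ - Bf A τ ξ + Bf A τ τ := by
  have h : ξ - τ = ξ + (-1 : ℂ) • τ := by funext j; simp [sub_eq_add_neg]
  rw [h, Bf_expand, Bf_smul_left, Bf_smul_right, Bf_smul_left, Bf_smul_right]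
  simp; ring

lemma h_bound (hpos : ∀ ξ : Fin m → ℂ, 0 ≤ (Bf A ξ ξ).re) (ξ τ : Fin m → ℂ) :
    ‖(Bf A ξ τ + (starRingEnd ℂ) (Bf A τ ξ)) / 2‖ ≤
      Real.sqrt (Bf A ξ ξ).re * Real.sqrt (Bf A τ τ).re := by
  set H : ℂ := (Bf A ξ τ + (starRingEnd ℂ) (Bf A τ ξ)) / 2 with hHdef
  by_cases hH0 : H = 0
  · rw [hH0]
    simp
    positivity
  -- the quadratic inequality
  have key : ∀ w : ℂ, 0 ≤ (Bf A ξ ξ).re + 2 * ((starRingEnd ℂ) w * H).re +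
      Complex.normSq w * (Bf A τ τ).re := by
    intro w
    have e1 : Bf A (ξ + w • τ) (ξ + w • τ)
        = Bf A ξ ξ + (starRingEnd ℂ) w * Bf A ξ τ + w * Bf A τ ξ
          + (Complex.normSq w : ℂ) * Bf A τ τ := by
      rw [Bf_expand, Bf_smul_left, Bf_smul_right, Bf_smul_left, Bf_smul_right,
        ← mul_assoc, Complex.mul_conj]
    have e2 := hpos (ξ + w • τ)
    rw [e1] at e2
    have e3 : (w * Bf A τ ξ).re = ((starRingEnd ℂ) w * (starRingEnd ℂ) (Bf A τ ξ)).re := by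
      rw [← map_mul, Complex.conj_re]
    have e4 : ((starRingEnd ℂ) w * Bf A ξ τ).re
          + ((starRingEnd ℂ) w * (starRingEnd ℂ) (Bf A τ ξ)).re
        = 2 * ((starRingEnd ℂ) w * H).re := by
      have : (starRingEnd ℂ) w * H * 2
          = (starRingEnd ℂ) w * Bf A ξ τ + (starRingEnd ℂ) w * (starRingEnd ℂ) (Bf A τ ξ) := by
        rw [hHdef]; ring
      have h5 := congrArg Complex.re this
      simp only [Complex.add_re, Complex.mul_re, Complex.re_ofNat, Complex.im_ofNat] at h5
      simp only [Complex.mul_re]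
      linarith
    simp only [Complex.add_re] at e2
    rw [e3] at e2
    have e7 : (↑(Complex.normSq w) * Bf A τ τ).re = Complex.normSq w * (Bf A τ τ).re :=
      Complex.re_ofReal_mul _ _
    linarith
  have habs : ‖H‖ ≠ 0 := by simpa using hH0
  have habspos : 0 < ‖H‖ := lt_of_le_of_ne (norm_nonneg H) (Ne.symm habs)
  have hquad : ∀ t : ℝ, 0 ≤ (Bf A τ τ).re * (t * t) + (2 * ‖H‖) * t + (Bf A ξ ξ).re := by
    intro t
    have hw := key ((t : ℂ) * (H / ((‖H‖ : ℝ) : ℂ)))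
    have hcast : ((‖H‖ : ℝ) : ℂ) ≠ 0 := Complex.ofReal_ne_zero.2 habs
    have e5 : (starRingEnd ℂ) ((t : ℂ) * (H / ((‖H‖ : ℝ) : ℂ))) * H
        = ((t * ‖H‖ : ℝ) : ℂ) := by
      rw [map_mul, map_div₀, Complex.conj_ofReal, Complex.conj_ofReal]
      field_simp
      rw [mul_assoc, Complex.conj_mul']
      push_cast
      ring
    have e6 : Complex.normSq ((t : ℂ) * (H / ((‖H‖ : ℝ) : ℂ))) = t ^ 2 := by
      rw [Complex.normSq_mul, Complex.normSq_div, Complex.normSq_ofReal, Complex.normSq_ofReal]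
      rw [Complex.normSq_eq_norm_sq]
      field_simp
    rw [e5, e6] at hw
    rw [Complex.ofReal_re] at hw
    linarith
  have hd := discrim_le_zero hquad
  rw [discrim] at hd
  have h7 : ‖H‖ ^ 2 ≤ (Bf A ξ ξ).re * (Bf A τ τ).re := by nlinarith
  calc ‖H‖ = Real.sqrt (‖H‖ ^ 2) :=
        (Real.sqrt_sq (norm_nonneg H)).symm
    _ ≤ Real.sqrt ((Bf A ξ ξ).re * (Bf A τ τ).re) := Real.sqrt_le_sqrt h7
    _ = Real.sqrt (Bf A ξ ξ).re * Real.sqrt (Bf A τ τ).re := Real.sqrt_mul (hpos ξ) _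

lemma amgm_aux (a b r : ℝ) (ha : 0 ≤ a) (hb : 0 ≤ b)
    (H : ∀ t : ℝ, 0 < t → r ≤ (t ^ 2 * a + b / t ^ 2) / 2) :
    r ≤ Real.sqrt a * Real.sqrt b := by
  rcases eq_or_lt_of_le ha with h0 | hapos
  · have : r ≤ 0 := by
      by_contra h
      push_neg at h
      rcases eq_or_lt_of_le hb with hb0 | hbpos
      · have := H 1 one_pos; rw [← h0, ← hb0] at this; norm_num at this; linarith
      · have ht : (0:ℝ) < Real.sqrt (b / r) := Real.sqrt_pos.2 (div_pos hbpos h)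
        have h2 := H _ ht
        rw [Real.sq_sqrt (le_of_lt (div_pos hbpos h)), ← h0] at h2
        have hbne : b ≠ 0 := ne_of_gt hbpos
        have : (0 * (b/r) + b / (b/r)) / 2 = r / 2 := by field_simp; ring
        rw [mul_comm] at this
        rw [this] at h2
        linarith
    exact this.trans (by positivity)
  · rcases eq_or_lt_of_le hb with hb0 | hbpos
    · have : r ≤ 0 := by
        by_contra h
        push_neg at h
        have ht : (0:ℝ) < Real.sqrt (r / a) := Real.sqrt_pos.2 (div_pos h hapos)
        have h2 := H _ ht
        rw [Real.sq_sqrt (le_of_lt (div_pos h hapos)), ← hb0] at h2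
        have hane : a ≠ 0 := ne_of_gt hapos
        have : (r / a * a + 0 / (r/a)) / 2 = r / 2 := by field_simp; ring
        rw [this] at h2
        linarith
      exact this.trans (by positivity)
    · have hsa : (0:ℝ) < Real.sqrt a := Real.sqrt_pos.2 hapos
      have hsb : (0:ℝ) < Real.sqrt b := Real.sqrt_pos.2 hbpos
      have ht : (0:ℝ) < Real.sqrt (Real.sqrt b / Real.sqrt a) :=
        Real.sqrt_pos.2 (div_pos hsb hsa)
      have h2 := H _ ht
      rw [Real.sq_sqrt (le_of_lt (div_pos hsb hsa))] at h2
      have e : (Real.sqrt b / Real.sqrt a * a + b / (Real.sqrt b / Real.sqrt a)) / 2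
          = Real.sqrt a * Real.sqrt b := by
        rw [show a = Real.sqrt a * Real.sqrt a from (Real.mul_self_sqrt ha).symm,
            show b = Real.sqrt b * Real.sqrt b from (Real.mul_self_sqrt hb).symm]
        field_simp
        rw [Real.sqrt_sq hsb.le, Real.sqrt_sq hsa.le]; ring
      rw [e] at h2
      exact h2

lemma k_bound1 (γ : ℝ)
    (hsec : ∀ ξ : Fin m → ℂ, |(Bf A ξ ξ).im| ≤ γ * (Bf A ξ ξ).re) (ξ τ : Fin m → ℂ) :
    |(Bf A ξ τ + Bf A τ ξ).im| ≤ γ * ((Bf A ξ ξ).re + (Bf A τ τ).re) := by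
  have h1 := hsec (ξ + τ)
  have h2 := hsec (ξ - τ)
  rw [Bf_expand] at h1
  rw [Bf_sub] at h2
  rw [abs_le] at h1 h2 ⊢
  simp only [Complex.add_re, Complex.add_im, Complex.sub_re, Complex.sub_im] at h1 h2 ⊢
  obtain ⟨h1a, h1b⟩ := h1
  obtain ⟨h2a, h2b⟩ := h2
  constructor <;> nlinarith

lemma k_bound2 (γ : ℝ) (hγ : 0 ≤ γ) (hpos : ∀ ξ : Fin m → ℂ, 0 ≤ (Bf A ξ ξ).re)
    (hsec : ∀ ξ : Fin m → ℂ, |(Bf A ξ ξ).im| ≤ γ * (Bf A ξ ξ).re) (ξ τ : Fin m → ℂ) :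
    |(Bf A ξ τ + Bf A τ ξ).im| ≤
      2 * γ * (Real.sqrt (Bf A ξ ξ).re * Real.sqrt (Bf A τ τ).re) := by
  have key : ∀ t : ℝ, 0 < t → |(Bf A ξ τ + Bf A τ ξ).im| ≤
      (t ^ 2 * (2 * γ * (Bf A ξ ξ).re) + (2 * γ * (Bf A τ τ).re) / t ^ 2) / 2 := by
    intro t ht
    have htne : (t : ℂ) ≠ 0 := by exact_mod_cast ne_of_gt ht
    have h := k_bound1 γ hsec ((t:ℂ) • ξ) (((t:ℂ))⁻¹ • τ)
    have e1 : Bf A ((t:ℂ) • ξ) (((t:ℂ))⁻¹ • τ) + Bf A (((t:ℂ))⁻¹ • τ) ((t:ℂ) • ξ)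
        = Bf A ξ τ + Bf A τ ξ := by
      rw [Bf_smul_left, Bf_smul_right, Bf_smul_left, Bf_smul_right, map_inv₀,
        Complex.conj_ofReal]
      field_simp
    have e2 : (Bf A ((t:ℂ) • ξ) ((t:ℂ) • ξ)).re = t ^ 2 * (Bf A ξ ξ).re := by
      rw [Bf_smul_left, Bf_smul_right, Complex.conj_ofReal, ← mul_assoc,
        ← Complex.ofReal_mul, Complex.re_ofReal_mul]
      ring
    have e3 : (Bf A (((t:ℂ))⁻¹ • τ) (((t:ℂ))⁻¹ • τ)).re = (Bf A τ τ).re / t ^ 2 := by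
      rw [Bf_smul_left, Bf_smul_right, map_inv₀, Complex.conj_ofReal, ← mul_assoc]
      have : ((t:ℂ))⁻¹ * ((t:ℂ))⁻¹ = (((t^2)⁻¹ : ℝ) : ℂ) := by push_cast; ring
      rw [this, Complex.re_ofReal_mul]
      field_simp
    rw [e1, e2, e3] at h
    calc |(Bf A ξ τ + Bf A τ ξ).im| ≤ γ * (t ^ 2 * (Bf A ξ ξ).re + (Bf A τ τ).re / t ^ 2) := h
      _ = (t ^ 2 * (2 * γ * (Bf A ξ ξ).re) + (2 * γ * (Bf A τ τ).re) / t ^ 2) / 2 := by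
          field_simp
  have ha' : (0:ℝ) ≤ 2 * γ * (Bf A ξ ξ).re := mul_nonneg (by linarith) (hpos ξ)
  have hb' : (0:ℝ) ≤ 2 * γ * (Bf A τ τ).re := mul_nonneg (by linarith) (hpos τ)
  have h := amgm_aux _ _ _ ha' hb' key
  calc |(Bf A ξ τ + Bf A τ ξ).im|
      ≤ Real.sqrt (2 * γ * (Bf A ξ ξ).re) * Real.sqrt (2 * γ * (Bf A τ τ).re) := h
    _ = 2 * γ * (Real.sqrt (Bf A ξ ξ).re * Real.sqrt (Bf A τ τ).re) := by
        rw [← Real.sqrt_mul ha']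
        rw [show 2 * γ * (Bf A ξ ξ).re * (2 * γ * (Bf A τ τ).re)
          = (2*γ)^2 * ((Bf A ξ ξ).re * (Bf A τ τ).re) from by ring]
        rw [Real.sqrt_mul (sq_nonneg _), Real.sqrt_sq (by linarith),
          Real.sqrt_mul (hpos ξ)]

lemma k_bound3 (γ : ℝ) (hγ : 0 ≤ γ) (hpos : ∀ ξ : Fin m → ℂ, 0 ≤ (Bf A ξ ξ).re)
    (hsec : ∀ ξ : Fin m → ℂ, |(Bf A ξ ξ).im| ≤ γ * (Bf A ξ ξ).re) (ξ τ : Fin m → ℂ) :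
    ‖Bf A ξ τ - (starRingEnd ℂ) (Bf A τ ξ)‖ ≤
      2 * γ * (Real.sqrt (Bf A ξ ξ).re * Real.sqrt (Bf A τ τ).re) := by
  set D : ℂ := Bf A ξ τ - (starRingEnd ℂ) (Bf A τ ξ) with hDdef
  by_cases hD : D = 0
  · rw [hD]; simp; positivity
  have habs : ‖D‖ ≠ 0 := by simpa using hD
  have hcast : ((‖D‖ : ℝ) : ℂ) ≠ 0 := Complex.ofReal_ne_zero.2 habs
  set c : ℂ := Complex.I * (starRingEnd ℂ) D / ((‖D‖ : ℝ) : ℂ) with hcdef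
  have hc2 : Complex.normSq c = 1 := by
    rw [hcdef, Complex.normSq_div, Complex.normSq_mul, Complex.normSq_I,
      Complex.normSq_conj, Complex.normSq_ofReal, Complex.normSq_eq_norm_sq]
    field_simp
  have e2 : (Bf A (c • ξ) (c • ξ)).re = (Bf A ξ ξ).re := by
    rw [Bf_smul_left, Bf_smul_right, ← mul_assoc, Complex.mul_conj, hc2]
    simp
  have e1 : (Bf A (c • ξ) τ + Bf A τ (c • ξ)).im = ‖D‖ := by
    rw [Complex.add_im, Bf_smul_left, Bf_smul_right]
    have h2 : ((starRingEnd ℂ) c * Bf A τ ξ).im = - (c * (starRingEnd ℂ) (Bf A τ ξ)).im := by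
      rw [show c * (starRingEnd ℂ) (Bf A τ ξ)
          = (starRingEnd ℂ) ((starRingEnd ℂ) c * Bf A τ ξ) from by rw [map_mul]; simp]
      rw [Complex.conj_im]; ring
    rw [h2]
    have h3 : (c * Bf A ξ τ).im - (c * (starRingEnd ℂ) (Bf A τ ξ)).im = (c * D).im := by
      rw [hDdef, mul_sub, Complex.sub_im]
    rw [show (c * Bf A ξ τ).im + -(c * (starRingEnd ℂ) (Bf A τ ξ)).im
        = (c * Bf A ξ τ).im - (c * (starRingEnd ℂ) (Bf A τ ξ)).im from by ring, h3]
    have h4 : c * D = Complex.I * ((‖D‖ : ℝ) : ℂ) := by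
      rw [hcdef]
      field_simp
      rw [Complex.conj_mul']
    rw [h4]
    simp
  have h := k_bound2 γ hγ hpos hsec (c • ξ) τ
  rw [e1, e2] at h
  rwa [_root_.abs_of_nonneg (norm_nonneg D)] at h

lemma sect_cs (γ : ℝ) (hγ : 0 ≤ γ) (hpos : ∀ ξ : Fin m → ℂ, 0 ≤ (Bf A ξ ξ).re)
    (hsec : ∀ ξ : Fin m → ℂ, |(Bf A ξ ξ).im| ≤ γ * (Bf A ξ ξ).re) (ξ τ : Fin m → ℂ) :
    ‖Bf A ξ τ‖ ≤
      (1 + γ) * (Real.sqrt (Bf A ξ ξ).re * Real.sqrt (Bf A τ τ).re) := by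
  have h1 := h_bound hpos ξ τ
  have h2 := k_bound3 γ hγ hpos hsec ξ τ
  have e : Bf A ξ τ = (Bf A ξ τ + (starRingEnd ℂ) (Bf A τ ξ)) / 2
      + (Bf A ξ τ - (starRingEnd ℂ) (Bf A τ ξ)) / 2 := by ring
  have htri := norm_add_le ((Bf A ξ τ + (starRingEnd ℂ) (Bf A τ ξ)) / 2)
    ((Bf A ξ τ - (starRingEnd ℂ) (Bf A τ ξ)) / 2)
  rw [← e] at htri
  have hhalf : ‖(Bf A ξ τ - (starRingEnd ℂ) (Bf A τ ξ)) / 2‖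
      = ‖Bf A ξ τ - (starRingEnd ℂ) (Bf A τ ξ)‖ / 2 := by
    rw [norm_div]; simp
  rw [hhalf] at htri
  nlinarith


/-- Relative bound of the first-order cross term against the principal sectorial form
(the abstracted content of Lemma 4.2). -/
theorem stmt_14 {X : Type*} [MeasurableSpace X] (μ : Measure X)
    (m : ℕ) (hm : 1 ≤ m) (φ δ ρ₀ c₀ : ℝ)
    (hφ : φ ∈ Set.Ico (0:ℝ) (Real.pi / 2)) (hδ : δ ∈ Set.Ioc (0:ℝ) 1)
    (hρ₀ : 0 ≤ ρ₀) (hc₀ : 0 ≤ c₀)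
    (M : X → Matrix (Fin m) (Fin m) ℂ)
    (hM : ∀ᵐ x ∂μ, ∀ ξ : Fin m → ℂ,
      0 ≤ (∑ j, ∑ k, (starRingEnd ℂ) (ξ j) * M x j k * ξ k).re ∧
      |(∑ j, ∑ k, (starRingEnd ℂ) (ξ j) * M x j k * ξ k).im| ≤
        Real.tan φ * (∑ j, ∑ k, (starRingEnd ℂ) (ξ j) * M x j k * ξ k).re ∧
      ‖∑ j, ∑ k, (starRingEnd ℂ) (ξ j) * M x j k * ξ k‖ ≤
        δ⁻¹ * ∑ j, ‖ξ j‖ ^ 2)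
    (ρ : X → ℂ) (hρ : ∀ᵐ x ∂μ, ‖ρ x‖ ≤ ρ₀)
    (b : X → Fin m → ℂ) (hb : ∀ᵐ x ∂μ, ∑ j, ‖b x j‖ ^ 2 ≤ c₀)
    (u : X → ℂ) (hu : Integrable (fun x => ‖u x‖ ^ 2) μ)
    (F : X → Fin m → ℂ) (hFmeas : AEMeasurable F μ)
    (hFint : Integrable
      (fun x => (∑ j, ∑ k, (starRingEnd ℂ) (F x j) * M x j k * F x k).re) μ)
    (hcross : Integrable
      (fun x => ρ x * ∑ j, ∑ k, (starRingEnd ℂ) (u x * b x j) * M x j k * F x k) μ) :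
    ∀ ε : ℝ, 0 < ε →
      ‖(∫ x, ρ x * ∑ j, ∑ k, (starRingEnd ℂ) (u x * b x j) * M x j k * F x k ∂μ)‖ ≤
        ε * (∫ x, (∑ j, ∑ k, (starRingEnd ℂ) (F x j) * M x j k * F x k).re ∂μ) +
        (ρ₀ ^ 2 * c₀ * δ⁻¹ * (1 + Real.tan φ) ^ 2 / (4 * ε)) *
          ∫ x, ‖u x‖ ^ 2 ∂μ := by
  intro ε hε
  have hγ : 0 ≤ Real.tan φ := by
    rw [Real.tan_eq_sin_div_cos]
    apply div_nonneg
    · exact Real.sin_nonneg_of_nonneg_of_le_pi hφ.1 (by nlinarith [Real.pi_pos, hφ.2])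
    · exact le_of_lt (Real.cos_pos_of_mem_Ioo ⟨by nlinarith [Real.pi_pos, hφ.1], hφ.2⟩)
  set γ : ℝ := Real.tan φ with hγdef
  have hδ0 : 0 < δ := hδ.1
  have hδinv : 0 ≤ δ⁻¹ := le_of_lt (inv_pos.2 hδ0)
  set C : ℝ := ρ₀ ^ 2 * c₀ * δ⁻¹ * (1 + γ) ^ 2 / (4 * ε) with hCdef
  have key : ∀ᵐ x ∂μ,
      ‖ρ x * ∑ j, ∑ k, (starRingEnd ℂ) (u x * b x j) * M x j k * F x k‖ ≤
        ε * (∑ j, ∑ k, (starRingEnd ℂ) (F x j) * M x j k * F x k).re + C * ‖u x‖ ^ 2 := by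
    filter_upwards [hM, hρ, hb] with x hMx hρx hbx
    have hpos : ∀ ξ : Fin m → ℂ, 0 ≤ (Bf (M x) ξ ξ).re := fun ξ => (hMx ξ).1
    have hsec : ∀ ξ : Fin m → ℂ, |(Bf (M x) ξ ξ).im| ≤ γ * (Bf (M x) ξ ξ).re :=
      fun ξ => (hMx ξ).2.1
    have hbd : ∀ ξ : Fin m → ℂ, ‖Bf (M x) ξ ξ‖ ≤ δ⁻¹ * ∑ j, ‖ξ j‖ ^ 2 :=
      fun ξ => (hMx ξ).2.2
    have ecross : (∑ j, ∑ k, (starRingEnd ℂ) (u x * b x j) * M x j k * F x k)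
        = Bf (M x) (F x) (u x • b x) := by
      simp [Bf]
    have hcs := sect_cs γ hγ hpos hsec (F x) (u x • b x)
    -- bound on the q of u • b
    have hsum : (∑ j, ‖(u x • b x) j‖ ^ 2) = ‖u x‖ ^ 2 * ∑ j, ‖b x j‖ ^ 2 := by
      simp [Pi.smul_apply, norm_mul, mul_pow, Finset.mul_sum]
    have hqub : (Bf (M x) (u x • b x) (u x • b x)).re ≤ δ⁻¹ * c₀ * ‖u x‖ ^ 2 := by
      have h1 : (Bf (M x) (u x • b x) (u x • b x)).re
          ≤ ‖Bf (M x) (u x • b x) (u x • b x)‖ := Complex.re_le_norm _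
      have h2 := hbd (u x • b x)
      rw [hsum] at h2
      have h3 : δ⁻¹ * (‖u x‖ ^ 2 * ∑ j, ‖b x j‖ ^ 2) ≤ δ⁻¹ * c₀ * ‖u x‖ ^ 2 := by
        have : ‖u x‖ ^ 2 * (∑ j, ‖b x j‖ ^ 2) ≤ ‖u x‖ ^ 2 * c₀ :=
          mul_le_mul_of_nonneg_left hbx (by positivity)
        nlinarith
      linarith
    set P : ℝ := Real.sqrt (Bf (M x) (F x) (F x)).re with hPdef
    set Q : ℝ := ρ₀ * (1 + γ) * Real.sqrt (δ⁻¹ * c₀) * ‖u x‖ with hQdef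
    have hP0 : 0 ≤ P := Real.sqrt_nonneg _
    have hQ0 : 0 ≤ Q := by positivity
    have hsq : Real.sqrt (Bf (M x) (u x • b x) (u x • b x)).re
        ≤ Real.sqrt (δ⁻¹ * c₀) * ‖u x‖ := by
      calc Real.sqrt (Bf (M x) (u x • b x) (u x • b x)).re
          ≤ Real.sqrt (δ⁻¹ * c₀ * ‖u x‖ ^ 2) := Real.sqrt_le_sqrt hqub
        _ = Real.sqrt (δ⁻¹ * c₀) * ‖u x‖ := by
            rw [Real.sqrt_mul (by positivity), Real.sqrt_sq (norm_nonneg _)]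
    have hmain : ‖ρ x * ∑ j, ∑ k, (starRingEnd ℂ) (u x * b x j) * M x j k * F x k‖
        ≤ P * Q := by
      rw [ecross]
      rw [norm_mul]
      calc ‖ρ x‖ * ‖Bf (M x) (F x) (u x • b x)‖
          ≤ ρ₀ * ((1 + γ) * (P * Real.sqrt (Bf (M x) (u x • b x) (u x • b x)).re)) := by
            apply mul_le_mul hρx hcs (norm_nonneg _)
            exact hρ₀
        _ ≤ ρ₀ * ((1 + γ) * (P * (Real.sqrt (δ⁻¹ * c₀) * ‖u x‖))) := by
            have := mul_le_mul_of_nonneg_left hsq hP0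
            have h2 := mul_le_mul_of_nonneg_left this (by positivity : (0:ℝ) ≤ 1 + γ)
            exact mul_le_mul_of_nonneg_left h2 hρ₀
        _ = P * Q := by rw [hQdef]; ring
    have hamgm : P * Q ≤ ε * P ^ 2 + Q ^ 2 / (4 * ε) := by
      have h2 : P * Q - ε * P ^ 2 ≤ Q ^ 2 / (4 * ε) := by
        rw [le_div_iff₀ (by positivity)]
        nlinarith [sq_nonneg (2 * ε * P - Q)]
      linarith
    have hP2 : P ^ 2 = (∑ j, ∑ k, (starRingEnd ℂ) (F x j) * M x j k * F x k).re := by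
      rw [hPdef, Real.sq_sqrt (hpos (F x))]
      rfl
    have hQ2 : Q ^ 2 / (4 * ε) = C * ‖u x‖ ^ 2 := by
      have hQsq : Q ^ 2 = ρ₀ ^ 2 * c₀ * δ⁻¹ * (1 + γ) ^ 2 * ‖u x‖ ^ 2 := by
        rw [hQdef, mul_pow, mul_pow, mul_pow, Real.sq_sqrt (by positivity)]
        ring
      rw [hQsq, hCdef]
      ring
    calc ‖ρ x * ∑ j, ∑ k, (starRingEnd ℂ) (u x * b x j) * M x j k * F x k‖
        ≤ P * Q := hmain
      _ ≤ ε * P ^ 2 + Q ^ 2 / (4 * ε) := hamgm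
      _ = ε * (∑ j, ∑ k, (starRingEnd ℂ) (F x j) * M x j k * F x k).re
          + C * ‖u x‖ ^ 2 := by rw [hP2, hQ2]
  have hint2 : MeasureTheory.Integrable (fun x =>
      ε * (∑ j, ∑ k, (starRingEnd ℂ) (F x j) * M x j k * F x k).re + C * ‖u x‖ ^ 2) μ :=
    (hFint.const_mul ε).add (hu.const_mul C)
  calc ‖(∫ x, ρ x * ∑ j, ∑ k, (starRingEnd ℂ) (u x * b x j) * M x j k * F x k ∂μ)‖
      = ‖∫ x, ρ x * ∑ j, ∑ k, (starRingEnd ℂ) (u x * b x j) * M x j k * F x k ∂μ‖ :=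
        rfl
    _ ≤ ∫ x, ‖ρ x * ∑ j, ∑ k, (starRingEnd ℂ) (u x * b x j) * M x j k * F x k‖ ∂μ :=
        MeasureTheory.norm_integral_le_integral_norm _
    _ ≤ ∫ x, (ε * (∑ j, ∑ k, (starRingEnd ℂ) (F x j) * M x j k * F x k).re
          + C * ‖u x‖ ^ 2) ∂μ :=
        MeasureTheory.integral_mono_ae hcross.norm hint2 key
    _ = ε * (∫ x, (∑ j, ∑ k, (starRingEnd ℂ) (F x j) * M x j k * F x k).re ∂μ)
        + C * ∫ x, ‖u x‖ ^ 2 ∂μ := by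
        rw [MeasureTheory.integral_add (hFint.const_mul ε) (hu.const_mul C),
          MeasureTheory.integral_const_mul, MeasureTheory.integral_const_mul]
end
end
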